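/- Let B be a group, φ ∈ Aut(B), and G = B ⋊ Z with Z acting via φ. Assume Z acts freely by conjugation on the set of conjugacy classes of nontrivial elements of B. If H is a virtually cyclic subgroup of G not contained in B, then H is infinite cyclic. -/

import Mathlib

/-- The semidirect product `B ⋊ ℤ` where `ℤ` acts via the automorphism `φ`. -/
abbrev SDP (B : Type*) [Group B] (φ : MulAut B) :=
  SemidirectProduct B (Multiplicative ℤ) (zpowersHom (MulAut B) φ)

/-- The canonical embedding of `B` into `B ⋊ ℤ`. -/
def inlB (B : Type*) [Group B] (φ : MulAut B) : B →* SDP B φ :=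
  SemidirectProduct.inl

/-- If `ℤ` acts freely by conjugation on the conjugacy classes of nontrivial
elements of `B`, then every virtually cyclic subgroup of `G = B ⋊ ℤ` not
contained in `B` is infinite cyclic. -/
theorem stmt7 (B : Type*) [Group B] (φ : MulAut B)
    (hfree : ∀ y : B, y ≠ 1 → ∀ r : ℤ, r ≠ 0 → ¬ IsConj ((φ ^ r) y) y)
    (H : Subgroup (SDP B φ))
    (hvc : ∃ K : Subgroup (SDP B φ), K ≤ H ∧ IsCyclic K ∧ K.relIndex H ≠ 0)
    (hnB : ¬ H ≤ (inlB B φ).range) :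
    Infinite H ∧ IsCyclic H := by
  classical
  set π : SDP B φ →* Multiplicative ℤ := SemidirectProduct.rightHom with hπ
  have hmem : ∀ x : SDP B φ, x ∈ (inlB B φ).range ↔ π x = 1 := by
    intro x
    rw [show (inlB B φ).range = (SemidirectProduct.inl : B →* SDP B φ).range from rfl,
      SemidirectProduct.range_inl_eq_ker_rightHom]
    rfl
  -- key zpow fact
  have key : ∀ a : SDP B φ, π a ≠ 1 → ∀ n : ℤ, π (a ^ n) = 1 → n = 0 := by
    intro a ha n hn
    rw [map_zpow] at hn
    have : n • Multiplicative.toAdd (π a) = 0 := by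
      have := congrArg Multiplicative.toAdd hn
      simpa using this
    rcases smul_eq_zero.mp this with h0 | h0
    · exact h0
    · exact absurd (by simpa using congrArg Multiplicative.ofAdd h0) ha
  obtain ⟨h, hH, hhB⟩ := SetLike.not_le_iff_exists.mp hnB
  rw [hmem] at hhB
  obtain ⟨K, hKH, hKcyc, hKrel⟩ := hvc
  -- K has an element with nontrivial projection
  have hKout : ∃ k ∈ K, π k ≠ 1 := by
    by_contra hcon
    push_neg at hcon
    apply hKrel
    rw [Subgroup.relIndex, Subgroup.index]
    have : Function.Injective (fun n : ℤ =>
        (QuotientGroup.mk ((⟨h, hH⟩ : H) ^ n) : H ⧸ K.subgroupOf H)) := by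
      intro n m hnm
      rw [QuotientGroup.eq] at hnm
      have hmem' : ((⟨h, hH⟩ : H) ^ n)⁻¹ * (⟨h, hH⟩ : H) ^ m ∈ K.subgroupOf H := hnm
      rw [Subgroup.mem_subgroupOf] at hmem'
      have : (h ^ n)⁻¹ * h ^ m ∈ K := by
        simpa using hmem'
      have h1 : π ((h ^ n)⁻¹ * h ^ m) = 1 := hcon _ this
      have h2 : (h ^ n)⁻¹ * h ^ m = h ^ (-n + m) := by
        rw [zpow_add, zpow_neg]
      rw [h2] at h1
      have := key h hhB _ h1
      omega
    haveI : Infinite (H ⧸ K.subgroupOf H) := Infinite.of_injective _ this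
    exact Nat.card_eq_zero_of_infinite
  obtain ⟨k, hkK, hkπ⟩ := hKout
  -- K meets the kernel trivially
  have hKtriv : ∀ x ∈ K, π x = 1 → x = 1 := by
    obtain ⟨g, hg⟩ := hKcyc
    have hgπ : π (g : SDP B φ) ≠ 1 := by
      intro hg1
      obtain ⟨n, hn⟩ := Subgroup.mem_zpowers_iff.mp (hg ⟨k, hkK⟩)
      apply hkπ
      have : (g : SDP B φ) ^ n = k := by
        have := congrArg (Subtype.val) hn; simpa using this
      rw [← this, map_zpow, hg1, one_zpow]
    intro x hxK hx1
    obtain ⟨n, hn⟩ := Subgroup.mem_zpowers_iff.mp (hg ⟨x, hxK⟩)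
    have hxg : (g : SDP B φ) ^ n = x := by
      have := congrArg (Subtype.val) hn; simpa using this
    have : π ((g : SDP B φ) ^ n) = 1 := by rw [hxg]; exact hx1
    have hn0 := key _ hgπ _ this
    rw [← hxg, hn0, zpow_zero]
  -- The intersection M = H ⊓ ker π is finite
  set M : Subgroup (SDP B φ) := H ⊓ SemidirectProduct.rightHom.ker with hMdef
  have hMmem : ∀ x : SDP B φ, x ∈ M ↔ x ∈ H ∧ π x = 1 := by
    intro x; rfl
  haveI : Finite (H ⧸ K.subgroupOf H) := by
    apply Nat.finite_of_card_ne_zero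
    exact hKrel
  haveI hMfin : Finite M := by
    have hj : Function.Injective (fun c : M =>
        (QuotientGroup.mk (⟨(c : SDP B φ), ((hMmem c).mp c.2).1⟩ : H) : H ⧸ K.subgroupOf H)) := by
      intro c c' hcc
      rw [QuotientGroup.eq] at hcc
      rw [Subgroup.mem_subgroupOf] at hcc
      have hKc : ((c : SDP B φ))⁻¹ * (c' : SDP B φ) ∈ K := by simpa using hcc
      have hπc : π (((c : SDP B φ))⁻¹ * (c' : SDP B φ)) = 1 := by
        rw [map_mul, map_inv, ((hMmem c).mp c.2).2, ((hMmem c').mp c'.2).2, inv_one, one_mul]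
      have := hKtriv _ hKc hπc
      have : (c : SDP B φ) = (c' : SDP B φ) := by
        rw [inv_mul_eq_one] at this; exact this
      exact Subtype.ext this
    exact Finite.of_injective _ hj
  -- conjugation by h preserves M
  have conjmem : ∀ a : SDP B φ, a ∈ H → ∀ c : SDP B φ, c ∈ M → a * c * a⁻¹ ∈ M := by
    intro a haH c hc
    rw [hMmem] at hc ⊢
    refine ⟨H.mul_mem (H.mul_mem haH hc.1) (H.inv_mem haH), ?_⟩
    rw [map_mul, map_mul, map_inv, hc.2, mul_one, mul_inv_cancel]
  set σ : Equiv.Perm M :=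
    { toFun := fun c => ⟨h * c * h⁻¹, conjmem h hH c c.2⟩
      invFun := fun c => ⟨h⁻¹ * c * h, by
        have := conjmem h⁻¹ (H.inv_mem hH) c c.2
        simpa using this⟩
      left_inv := fun c => by
        apply Subtype.ext
        show h⁻¹ * (h * (c : SDP B φ) * h⁻¹) * h = (c : SDP B φ)
        group
      right_inv := fun c => by
        apply Subtype.ext
        show h * (h⁻¹ * (c : SDP B φ) * h) * h⁻¹ = (c : SDP B φ)
        group } with hσ
  set n : ℕ := orderOf σ with hn
  have hn0 : n ≠ 0 := (orderOf_pos σ).ne'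
  have hσn : σ ^ n = 1 := pow_orderOf_eq_one σ
  have pow_apply : ∀ (m : ℕ) (y : M), (((σ ^ m) y : M) : SDP B φ) = h ^ m * (y : SDP B φ) * (h ^ m)⁻¹ := by
    intro m
    induction m with
    | zero => intro y; simp
    | succ m ih =>
      intro y
      have : ((σ ^ (m + 1)) y : M) = σ ((σ ^ m) y) := by rw [pow_succ' σ m]; rfl
      rw [this]
      show h * (((σ ^ m) y : M) : SDP B φ) * h⁻¹ = _
      rw [ih y, pow_succ h m]
      group
  -- M is trivial
  have hMtriv : ∀ y : SDP B φ, y ∈ H → π y = 1 → y = 1 := by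
    intro y hyH hyπ
    by_contra hy1
    have hyM : y ∈ M := (hMmem y).mpr ⟨hyH, hyπ⟩
    have hconj : h ^ n * y * (h ^ n)⁻¹ = y := by
      have h' := pow_apply n ⟨y, hyM⟩
      rw [hσn] at h'
      simp at h'
      exact h'.symm
    -- write y = inl c
    have hyr : y ∈ (inlB B φ).range := (hmem y).mpr hyπ
    obtain ⟨c, hc⟩ := hyr
    have hc1 : c ≠ 1 := by
      intro h1
      apply hy1
      rw [← hc, h1, map_one]
    set a : SDP B φ := h ^ n with ha
    have hdecomp : a = SemidirectProduct.inl a.left * SemidirectProduct.inr a.right :=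
      (SemidirectProduct.inl_left_mul_inr_right a).symm
    have hconj2 : a * SemidirectProduct.inl c * a⁻¹ =
        SemidirectProduct.inl (a.left * (zpowersHom (MulAut B) φ) a.right c * a.left⁻¹) := by
      have haut : SemidirectProduct.inr a.right * SemidirectProduct.inl c *
          (SemidirectProduct.inr a.right)⁻¹ =
          (SemidirectProduct.inl ((zpowersHom (MulAut B) φ) a.right c) : SDP B φ) := by
        rw [SemidirectProduct.inl_aut, map_inv]
      calc a * SemidirectProduct.inl c * a⁻¹
          = (SemidirectProduct.inl a.left * SemidirectProduct.inr a.right) *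
            SemidirectProduct.inl c *
            (SemidirectProduct.inl a.left * SemidirectProduct.inr a.right)⁻¹ := by
            rw [← hdecomp]
        _ = SemidirectProduct.inl a.left * (SemidirectProduct.inr a.right *
            SemidirectProduct.inl c * (SemidirectProduct.inr a.right)⁻¹) *
            (SemidirectProduct.inl a.left)⁻¹ := by group
        _ = SemidirectProduct.inl a.left *
            SemidirectProduct.inl ((zpowersHom (MulAut B) φ) a.right c) *
            (SemidirectProduct.inl a.left)⁻¹ := by rw [haut]
        _ = _ := by rw [← map_inv, ← map_mul, ← map_mul]
    have hCeq : a.left * (zpowersHom (MulAut B) φ) a.right c * a.left⁻¹ = c := by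
      have heq : (SemidirectProduct.inl
          (a.left * (zpowersHom (MulAut B) φ) a.right c * a.left⁻¹) : SDP B φ) =
          SemidirectProduct.inl c := by
        rw [← hconj2]
        rw [show (SemidirectProduct.inl c : SDP B φ) = y from hc]
        exact hconj
      exact SemidirectProduct.inl_injective heq
    have hconjIs : IsConj ((φ ^ Multiplicative.toAdd a.right) c) c := by
      rw [isConj_iff]
      exact ⟨a.left, by simpa [zpowersHom_apply] using hCeq⟩
    have har : Multiplicative.toAdd a.right ≠ 0 := by
      intro h0
      have : π a = 1 := by
        have : a.right = 1 := by
          simpa using congrArg Multiplicative.ofAdd h0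
        simpa [hπ, SemidirectProduct.rightHom] using this
      have h1 : π (h ^ (n : ℤ)) = 1 := by rw [zpow_natCast]; exact this
      have h2 := key h hhB _ h1
      exact hn0 (by exact_mod_cast h2)
    exact hfree c hc1 _ har hconjIs
  -- conclusion
  have ψinj : Function.Injective (π.comp H.subtype) := by
    rw [injective_iff_map_eq_one]
    intro x hx
    exact Subtype.ext (hMtriv x x.2 hx)
  constructor
  · refine Infinite.of_injective (fun m : ℤ => (⟨h, hH⟩ : H) ^ m) ?_
    intro m m' hmm
    have : h ^ m = h ^ m' := by
      have := congrArg (Subtype.val) hmm; simpa using this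
    have h1 : π (h ^ (m - m')) = 1 := by
      rw [zpow_sub, this, mul_inv_cancel, map_one]
    have := key h hhB _ h1
    omega
  · haveI : IsCyclic (Multiplicative ℤ) := inferInstance
    let e : H ≃* (π.comp H.subtype).range := MonoidHom.ofInjective ψinj
    exact isCyclic_of_surjective e.symm e.symm.surjective
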